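/- Let S be a nonnegative integrable random variable on a probability space with m := 1 − E[S] satisfying 0 < m < 1, and fix T > 0. (a) For 0 ≤ α < α' ≤ 1 and x ∈ ℝ, if σ ∈ [0,∞) satisfies C_BS(x,σ) = E[(S − e^x)₊] + α·m and σ' ∈ [0,∞) satisfies C_BS(x,σ') = E[(S − e^x)₊] + α'·m, then σ < σ'; in particular, whenever the α-collateralised Call implied volatility exists for α ∈ [0,1), it is strictly smaller than the Put-implied volatility I_S^p(x). (b) The threshold x*(β) := inf{x ∈ ℝ : there exists σ ∈ [0,∞) with C_BS(x,σ) = E[(S − e^x)₊] + β·m} is strictly decreasing in β on [0,1): if 0 ≤ α < α' < 1 then x*(α') < x*(α). -/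

import Mathlib

open MeasureTheory Filter

/-- Standard normal cumulative distribution function. -/
noncomputable def stdNormalCDF (y : ℝ) : ℝ :=
  ∫ t in Set.Iic y, Real.exp (-t ^ 2 / 2) / Real.sqrt (2 * Real.pi)

/-- Black-Scholes d₊ (maturity `T`, log-strike `x`, volatility `σ`). -/
noncomputable def dplus (T x σ : ℝ) : ℝ := -x / (σ * Real.sqrt T) + σ * Real.sqrt T / 2

/-- Black-Scholes d₋ (maturity `T`, log-strike `x`, volatility `σ`). -/
noncomputable def dminus (T x σ : ℝ) : ℝ := -x / (σ * Real.sqrt T) - σ * Real.sqrt T / 2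

/-- Black-Scholes Call price (maturity `T`, log-strike `x`, volatility `σ`),
with the convention `CBS T x 0 = max (1 - exp x) 0`. -/
noncomputable def CBS (T x σ : ℝ) : ℝ :=
  if σ = 0 then max (1 - Real.exp x) 0
  else stdNormalCDF (dplus T x σ) - Real.exp x * stdNormalCDF (dminus T x σ)

/-- Black-Scholes Put price (maturity `T`, log-strike `x`, volatility `σ`),
with the convention `PBS T x 0 = max (exp x - 1) 0`. -/
noncomputable def PBS (T x σ : ℝ) : ℝ :=
  if σ = 0 then max (Real.exp x - 1) 0
  else Real.exp x * stdNormalCDF (-dminus T x σ) - stdNormalCDF (-dplus T x σ)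

namespace AlphaCollateralAux

open Set Topology

/-! ### The standard Gaussian density -/

noncomputable def gauss (y : ℝ) : ℝ := Real.exp (-y ^ 2 / 2) / Real.sqrt (2 * Real.pi)

lemma gauss_pos (y : ℝ) : 0 < gauss y :=
  div_pos (Real.exp_pos _) (Real.sqrt_pos.2 (by positivity))

lemma gauss_eq (y : ℝ) : gauss y = Real.exp (-(1/2) * y ^ 2) / Real.sqrt (2 * Real.pi) := by
  unfold gauss; ring_nf

lemma gauss_integrable : Integrable gauss := by
  have h := (integrable_exp_neg_mul_sq (by norm_num : (0:ℝ) < 1/2)).div_const (Real.sqrt (2 * Real.pi))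
  exact h.congr (by filter_upwards with y using (gauss_eq y).symm)

lemma gauss_integral : ∫ y, gauss y = 1 := by
  have h : ∫ y, gauss y = (∫ y : ℝ, Real.exp (-(1/2) * y ^ 2)) / Real.sqrt (2 * Real.pi) := by
    rw [← integral_div]; exact integral_congr_ae (by filter_upwards with y using gauss_eq y)
  rw [h, integral_gaussian]
  rw [div_eq_one_iff_eq (by positivity)]
  rw [show Real.pi / (1/2) = 2 * Real.pi by ring]

lemma gauss_cont : Continuous gauss := by
  unfold gauss; fun_prop

lemma gauss_neg (y : ℝ) : gauss (-y) = gauss y := by unfold gauss; ring_nf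

lemma stdNormalCDF_eq (y : ℝ) : stdNormalCDF y = ∫ t in Set.Iic y, gauss t := rfl
lemma stdNormalCDF_hasDerivAt (y : ℝ) : HasDerivAt stdNormalCDF (gauss y) y := by
  have key : ∀ z : ℝ, stdNormalCDF z = stdNormalCDF 0 + ∫ t in (0:ℝ)..z, gauss t := by
    intro z
    rw [stdNormalCDF_eq, stdNormalCDF_eq]
    rw [← intervalIntegral.integral_Iic_sub_Iic (gauss_integrable.integrableOn)
      (gauss_integrable.integrableOn)]
    ring
  have h : HasDerivAt (fun z => stdNormalCDF 0 + ∫ t in (0:ℝ)..z, gauss t) (gauss y) y := by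
    have h2 : HasDerivAt (fun z => ∫ t in (0:ℝ)..z, gauss t) (gauss y) y :=
      intervalIntegral.integral_hasDerivAt_right
        (gauss_integrable.intervalIntegrable (a := 0) (b := y))
        (gauss_integrable.aestronglyMeasurable.stronglyMeasurableAtFilter (l := 𝓝 y))
        gauss_cont.continuousAt
    exact h2.const_add _
  exact h.congr_of_eventuallyEq (by filter_upwards with z using (key z))

lemma stdNormalCDF_nonneg (y : ℝ) : 0 ≤ stdNormalCDF y := by
  rw [stdNormalCDF_eq]
  exact integral_nonneg fun t => (gauss_pos t).le

lemma stdNormalCDF_tendsto_atTop : Tendsto stdNormalCDF atTop (𝓝 1) := by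
  have h : AECover (volume : Measure ℝ) atTop (fun y : ℝ => Iic y) := aecover_Iic tendsto_id
  have := h.integral_tendsto_of_countably_generated gauss_integrable
  rw [gauss_integral] at this
  exact this

lemma stdNormalCDF_add_neg (y : ℝ) : stdNormalCDF y + stdNormalCDF (-y) = 1 := by
  have h1 : stdNormalCDF (-y) = ∫ t in Set.Ioi y, gauss t := by
    rw [stdNormalCDF_eq]
    have : (∫ t in Set.Iic (-y), gauss t) = ∫ t in Set.Iic (-y), gauss (-t) := by
      simp_rw [gauss_neg]
    rw [this, integral_comp_neg_Iic, neg_neg]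
  rw [stdNormalCDF_eq, h1,
    intervalIntegral.integral_Iic_add_Ioi gauss_integrable.integrableOn gauss_integrable.integrableOn,
    gauss_integral]

lemma stdNormalCDF_tendsto_atBot : Tendsto stdNormalCDF atBot (𝓝 0) := by
  have : Tendsto (fun y : ℝ => 1 - stdNormalCDF (-y)) atBot (𝓝 (1 - 1)) :=
    tendsto_const_nhds.sub (stdNormalCDF_tendsto_atTop.comp tendsto_neg_atBot_atTop)
  simp only [sub_self] at this
  exact this.congr fun y => by linarith [stdNormalCDF_add_neg y]

lemma stdNormalCDF_le_one (y : ℝ) : stdNormalCDF y ≤ 1 := by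
  have := stdNormalCDF_add_neg y
  linarith [stdNormalCDF_nonneg (-y)]

lemma gauss_hasDerivAt (y : ℝ) : HasDerivAt gauss (-y * gauss y) y := by
  have h1 : HasDerivAt (fun t : ℝ => -t ^ 2 / 2) (-y) y := by
    have h := ((hasDerivAt_pow 2 y).neg.div_const 2)
    refine h.congr_deriv ?_
    push_cast
    ring
  have h2 := (h1.exp).div_const (Real.sqrt (2 * Real.pi))
  refine h2.congr_deriv ?_
  unfold gauss
  ring

lemma id_mul_gauss_integrable : Integrable (fun t => t * gauss t) := by
  have h := (integrable_mul_exp_neg_mul_sq (by norm_num : (0:ℝ) < 1/2)).div_const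
    (Real.sqrt (2 * Real.pi))
  refine h.congr ?_
  filter_upwards with y
  unfold gauss
  rw [show -(1/2 : ℝ) * y ^ 2 = -y ^ 2 / 2 by ring]
  ring

lemma gauss_tendsto_atBot : Tendsto gauss atBot (𝓝 0) := by
  have hsq : Tendsto (fun y : ℝ => y ^ 2) atBot atTop := by
    have h := (tendsto_pow_atTop (α := ℝ) (n := 2) two_ne_zero).comp tendsto_neg_atBot_atTop
    refine h.congr fun y => ?_
    simp [Function.comp, neg_pow]
  have h1 : Tendsto (fun y : ℝ => -y ^ 2 / 2) atBot atBot := by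
    apply Tendsto.atBot_div_const (by norm_num : (0:ℝ) < 2)
    exact tendsto_neg_atBot_iff.2 hsq
  have := (Real.tendsto_exp_atBot.comp h1).div_const (Real.sqrt (2 * Real.pi))
  simp only [zero_div] at this
  exact this.congr fun y => rfl

lemma integral_id_mul_gauss (y : ℝ) : ∫ t in Set.Iic y, t * gauss t = -gauss y := by
  have h := integral_Iic_of_hasDerivAt_of_tendsto (f := fun t => -gauss t)
    (f' := fun t => t * gauss t) (a := y) (m := 0)
    (Continuous.continuousWithinAt gauss_cont.neg)
    (fun t _ => ((gauss_hasDerivAt t).neg).congr_deriv (by ring))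
    (id_mul_gauss_integrable.integrableOn)
    (by simpa using (gauss_tendsto_atBot.neg : Tendsto (fun y => -gauss y) atBot (𝓝 (-0))))
  simpa using h

lemma mill (y : ℝ) : 0 ≤ gauss y + y * stdNormalCDF y := by
  rcases le_or_gt 0 y with hy | hy
  · have := stdNormalCDF_nonneg y
    nlinarith [gauss_pos y]
  · -- N y ≤ gauss y / (-y)
    have hmono : stdNormalCDF y ≤ ∫ t in Set.Iic y, (t / y) * gauss t := by
      rw [stdNormalCDF_eq]
      refine setIntegral_mono_on gauss_integrable.integrableOn
        ((id_mul_gauss_integrable.div_const y).congr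
          (by filter_upwards with t; ring)).integrableOn
        measurableSet_Iic ?_
      intro t ht
      have ht' : t ≤ y := ht
      have h1 : 1 ≤ t / y := by
        rw [le_div_iff_of_neg hy]
        simpa using ht'
      nlinarith [gauss_pos t]
    have hval : ∫ t in Set.Iic y, (t / y) * gauss t = gauss y / (-y) := by
      have : ∀ t : ℝ, (t / y) * gauss t = (1 / y) * (t * gauss t) := fun t => by ring
      simp_rw [this]
      rw [integral_const_mul, integral_id_mul_gauss]
      field_simp
    rw [hval] at hmono
    have h2 : stdNormalCDF y * (-y) ≤ gauss y := by
      rw [← le_div_iff₀ (by linarith : (0:ℝ) < -y)]; exact hmono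
    nlinarith

lemma ratio_mono {a b : ℝ} (hab : a ≤ b) :
    stdNormalCDF a * gauss b ≤ stdNormalCDF b * gauss a := by
  have hd : ∀ y : ℝ, HasDerivAt (fun y => stdNormalCDF y / gauss y)
      ((gauss y * gauss y - stdNormalCDF y * (-y * gauss y)) / gauss y ^ 2) y :=
    fun y => (stdNormalCDF_hasDerivAt y).div (gauss_hasDerivAt y) (gauss_pos y).ne'
  have hmono : Monotone (fun y => stdNormalCDF y / gauss y) := by
    refine monotone_of_deriv_nonneg (fun y => (hd y).differentiableAt) fun y => ?_
    rw [(hd y).deriv]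
    have hnum : 0 ≤ gauss y * gauss y - stdNormalCDF y * (-y * gauss y) := by
      have := mill y
      nlinarith [gauss_pos y]
    exact div_nonneg hnum (sq_nonneg _)
  have := hmono hab
  rw [div_le_div_iff₀ (gauss_pos a) (gauss_pos b)] at this
  linarith

section BS
variable {T x : ℝ} (hT : 0 < T)

lemma sqrtT_pos (hT : 0 < T) : 0 < Real.sqrt T := Real.sqrt_pos.2 hT

lemma dplus_sub_dminus (σ : ℝ) : dplus T x σ - dminus T x σ = σ * Real.sqrt T := by
  unfold dplus dminus; ring

lemma gauss_dplus {σ : ℝ} (hT : 0 < T) (hσ : 0 < σ) :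
    gauss (dplus T x σ) = Real.exp x * gauss (dminus T x σ) := by
  have hs : σ * Real.sqrt T ≠ 0 := by positivity
  unfold gauss dplus dminus
  rw [mul_div_assoc', ← Real.exp_add]
  congr 1
  field_simp
  ring

lemma dplus_hasDerivAt {σ : ℝ} (hT : 0 < T) (hσ : 0 < σ) :
    HasDerivAt (fun s => dplus T x s) (x / (σ ^ 2 * Real.sqrt T) + Real.sqrt T / 2) σ := by
  have h1 : HasDerivAt (fun s : ℝ => -x / (s * Real.sqrt T))
      (x / (σ ^ 2 * Real.sqrt T)) σ := by
    have hinv : HasDerivAt (fun s : ℝ => s⁻¹) (-(σ ^ 2)⁻¹) σ := hasDerivAt_inv hσ.ne'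
    have := hinv.const_mul (-x / Real.sqrt T)
    refine this.congr_of_eventuallyEq ?_ |>.congr_deriv ?_
    · filter_upwards with s
      field_simp
    · have h := (sqrtT_pos hT).ne'
      field_simp
  have h2 : HasDerivAt (fun s : ℝ => s * Real.sqrt T / 2) (Real.sqrt T / 2) σ := by
    have := (hasDerivAt_id σ).mul_const (Real.sqrt T)
    exact this.div_const 2 |>.congr_deriv (by ring)
  exact (h1.add h2 : _)

lemma dminus_hasDerivAt {σ : ℝ} (hT : 0 < T) (hσ : 0 < σ) :
    HasDerivAt (fun s => dminus T x s) (x / (σ ^ 2 * Real.sqrt T) - Real.sqrt T / 2) σ := by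
  have h1 := dplus_hasDerivAt (x := x) hT hσ
  have h2 : HasDerivAt (fun s : ℝ => s * Real.sqrt T) (Real.sqrt T) σ :=
    (hasDerivAt_id σ).mul_const (Real.sqrt T) |>.congr_deriv (by ring)
  have := h1.sub h2
  refine this.congr_of_eventuallyEq ?_ |>.congr_deriv (by ring)
  filter_upwards with s
  simp only [Pi.sub_apply]
  unfold dminus dplus
  ring

noncomputable def gBS (T x σ : ℝ) : ℝ :=
  stdNormalCDF (dplus T x σ) - Real.exp x * stdNormalCDF (dminus T x σ)

lemma gBS_hasDerivAt {σ : ℝ} (hT : 0 < T) (hσ : 0 < σ) :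
    HasDerivAt (fun s => gBS T x s) (gauss (dplus T x σ) * Real.sqrt T) σ := by
  have h1 := (stdNormalCDF_hasDerivAt (dplus T x σ)).comp σ (dplus_hasDerivAt hT hσ)
  have h2 := ((stdNormalCDF_hasDerivAt (dminus T x σ)).comp σ (dminus_hasDerivAt hT hσ)).const_mul (Real.exp x)
  have h := h1.sub h2
  refine h.congr_deriv ?_
  rw [gauss_dplus hT hσ]
  ring

lemma gBS_strictMonoOn (hT : 0 < T) : StrictMonoOn (fun σ => gBS T x σ) (Set.Ioi 0) := by
  refine strictMonoOn_of_deriv_pos (convex_Ioi 0) ?_ ?_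
  · intro σ hσ
    exact ((gBS_hasDerivAt hT hσ).continuousAt).continuousWithinAt
  · intro σ hσ
    rw [interior_Ioi] at hσ
    rw [(gBS_hasDerivAt hT hσ).deriv]
    exact mul_pos (gauss_pos _) (sqrtT_pos hT)

lemma CBS_eq_gBS {σ : ℝ} (hσ : σ ≠ 0) : CBS T x σ = gBS T x σ := by
  unfold CBS gBS; rw [if_neg hσ]

lemma CBS_lower_bound {σ : ℝ} (hT : 0 < T) (hσ : 0 ≤ σ) :
    max (1 - Real.exp x) 0 ≤ CBS T x σ := by
  rcases eq_or_lt_of_le hσ with h | h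
  · simp [CBS, ← h]
  · rw [CBS_eq_gBS h.ne']
    have hle : dminus T x σ ≤ dplus T x σ := by
      have := dplus_sub_dminus (T := T) (x := x) σ
      nlinarith [sqrtT_pos hT]
    have hgd := gauss_dplus (x := x) hT h
    have key1 : 0 ≤ gBS T x σ := by
      have h1 := ratio_mono hle
      rw [hgd] at h1
      have hg := gauss_pos (dminus T x σ)
      unfold gBS
      nlinarith
    have key2 : 1 - Real.exp x ≤ gBS T x σ := by
      have h1 := ratio_mono (neg_le_neg hle)
      rw [gauss_neg, gauss_neg, hgd] at h1
      have hg := gauss_pos (dminus T x σ)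
      have h2 : stdNormalCDF (-dplus T x σ) ≤ Real.exp x * stdNormalCDF (-dminus T x σ) := by
        have hexp := Real.exp_pos x
        nlinarith
      have e1 := stdNormalCDF_add_neg (dplus T x σ)
      have e2 := stdNormalCDF_add_neg (dminus T x σ)
      unfold gBS
      nlinarith [Real.exp_pos x]
    exact max_le key2 key1
end BS

section Lim
variable {T x : ℝ}

lemma stdNormalCDF_continuous : Continuous stdNormalCDF :=
  continuous_iff_continuousAt.2 fun y => (stdNormalCDF_hasDerivAt y).continuousAt

lemma first_term_tendsto_atTop (hT : 0 < T) :
    Tendsto (fun σ : ℝ => -x / (σ * Real.sqrt T)) atTop (𝓝 0) := by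
  have h : Tendsto (fun σ : ℝ => (-x / Real.sqrt T) * σ⁻¹) atTop (𝓝 ((-x / Real.sqrt T) * 0)) :=
    tendsto_inv_atTop_zero.const_mul _
  rw [mul_zero] at h
  refine h.congr fun σ => ?_
  field_simp

lemma second_term_tendsto_atTop (hT : 0 < T) :
    Tendsto (fun σ : ℝ => σ * Real.sqrt T / 2) atTop atTop := by
  have := (tendsto_id (α := ℝ)).atTop_mul_const (r := Real.sqrt T / 2) (by positivity)
  refine this.congr fun σ => by simp [id]; ring

lemma dplus_tendsto_atTop (hT : 0 < T) :
    Tendsto (fun σ : ℝ => dplus T x σ) atTop atTop :=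
  (first_term_tendsto_atTop hT).add_atTop (second_term_tendsto_atTop hT)

lemma dminus_tendsto_atBot (hT : 0 < T) :
    Tendsto (fun σ : ℝ => dminus T x σ) atTop atBot := by
  have h2 : Tendsto (fun σ : ℝ => -(σ * Real.sqrt T / 2)) atTop atBot :=
    tendsto_neg_atBot_iff.2 (second_term_tendsto_atTop hT)
  have h3 := (first_term_tendsto_atTop (x := x) hT).add_atBot h2
  exact h3.congr fun σ => by unfold dminus; ring

lemma gBS_tendsto_one (hT : 0 < T) :
    Tendsto (fun σ : ℝ => gBS T x σ) atTop (𝓝 1) := by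
  have h1 := stdNormalCDF_tendsto_atTop.comp (dplus_tendsto_atTop (x := x) hT)
  have h2 := (stdNormalCDF_tendsto_atBot.comp (dminus_tendsto_atBot (x := x) hT)).const_mul
    (Real.exp x)
  have := h1.sub h2
  simpa [gBS] using this

lemma inv_tendsto_right : Tendsto (fun σ : ℝ => σ⁻¹) (𝓝[>] (0:ℝ)) atTop :=
  tendsto_inv_nhdsGT_zero

lemma second_term_tendsto_right (hT : 0 < T) :
    Tendsto (fun σ : ℝ => σ * Real.sqrt T / 2) (𝓝[>] (0:ℝ)) (𝓝 0) := by
  have h : Tendsto (fun σ : ℝ => σ * Real.sqrt T / 2) (𝓝 (0:ℝ)) (𝓝 (0 * Real.sqrt T / 2)) := by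
    exact ((continuous_id.mul continuous_const).div_const 2).tendsto 0
  rw [zero_mul, zero_div] at h
  exact h.mono_left nhdsWithin_le_nhds

lemma CBS_tendsto_right (hT : 0 < T) :
    Tendsto (fun σ : ℝ => CBS T x σ) (𝓝[>] (0:ℝ)) (𝓝 (max (1 - Real.exp x) 0)) := by
  have hg : Tendsto (fun σ : ℝ => gBS T x σ) (𝓝[>] (0:ℝ)) (𝓝 (max (1 - Real.exp x) 0)) := by
    rcases lt_trichotomy x 0 with hx | hx | hx
    · -- x < 0 : dplus, dminus → atTop
      have hft : Tendsto (fun σ : ℝ => -x / (σ * Real.sqrt T)) (𝓝[>] (0:ℝ)) atTop := by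
        have hr : (0:ℝ) < -x / Real.sqrt T := div_pos (by linarith) (sqrtT_pos hT)
        have h := inv_tendsto_right.const_mul_atTop hr
        refine (h.congr fun σ => ?_)
        field_simp
      have hdp : Tendsto (fun σ : ℝ => dplus T x σ) (𝓝[>] (0:ℝ)) atTop := by
        have := hft.atTop_add (second_term_tendsto_right hT)
        exact this.congr fun σ => rfl
      have hdm : Tendsto (fun σ : ℝ => dminus T x σ) (𝓝[>] (0:ℝ)) atTop := by
        have h2 : Tendsto (fun σ : ℝ => -(σ * Real.sqrt T / 2)) (𝓝[>] (0:ℝ)) (𝓝 (-0)) :=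
          (second_term_tendsto_right hT).neg
        rw [neg_zero] at h2
        have := hft.atTop_add h2
        exact this.congr fun σ => by unfold dminus; ring
      have h1 := stdNormalCDF_tendsto_atTop.comp hdp
      have h2 := (stdNormalCDF_tendsto_atTop.comp hdm).const_mul (Real.exp x)
      have h3 := h1.sub h2
      have hmax : max (1 - Real.exp x) 0 = 1 - Real.exp x := by
        rw [max_eq_left]
        have : Real.exp x < 1 := by
          rw [← Real.exp_zero]; exact Real.exp_lt_exp.2 hx
        linarith
      rw [hmax]
      simpa [gBS] using h3
    · -- x = 0
      subst hx
      have hdp : Tendsto (fun σ : ℝ => dplus T 0 σ) (𝓝[>] (0:ℝ)) (𝓝 0) := by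
        have := second_term_tendsto_right hT
        refine this.congr fun σ => ?_
        unfold dplus; simp
      have hdm : Tendsto (fun σ : ℝ => dminus T 0 σ) (𝓝[>] (0:ℝ)) (𝓝 (-0)) := by
        have := (second_term_tendsto_right hT).neg
        refine this.congr fun σ => ?_
        unfold dminus; simp
      rw [neg_zero] at hdm
      have h1 := (stdNormalCDF_continuous.tendsto 0).comp hdp
      have h2 := ((stdNormalCDF_continuous.tendsto 0).comp hdm).const_mul (Real.exp 0)
      have h3 := h1.sub h2
      simp only [Real.exp_zero, one_mul, sub_self, Function.comp] at h3
      have : max (1 - Real.exp (0:ℝ)) 0 = 0 := by simp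
      rw [this]
      refine h3.congr fun σ => ?_
      unfold gBS
      simp
    · -- x > 0 : both → atBot
      have hft : Tendsto (fun σ : ℝ => -x / (σ * Real.sqrt T)) (𝓝[>] (0:ℝ)) atBot := by
        have h := (tendsto_const_mul_atBot_of_neg
          (r := -x / Real.sqrt T) (by
            apply div_neg_of_neg_of_pos (by linarith) (sqrtT_pos hT))).2 inv_tendsto_right
        refine (h.congr fun σ => ?_)
        field_simp
      have hdp : Tendsto (fun σ : ℝ => dplus T x σ) (𝓝[>] (0:ℝ)) atBot := by
        have := (second_term_tendsto_right hT).add_atBot hft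
        refine this.congr fun σ => by unfold dplus; ring
      have hdm : Tendsto (fun σ : ℝ => dminus T x σ) (𝓝[>] (0:ℝ)) atBot := by
        have h2 : Tendsto (fun σ : ℝ => -(σ * Real.sqrt T / 2)) (𝓝[>] (0:ℝ)) (𝓝 (-0)) :=
          (second_term_tendsto_right hT).neg
        have := h2.add_atBot hft
        refine this.congr fun σ => by unfold dminus; ring
      have h1 := stdNormalCDF_tendsto_atBot.comp hdp
      have h2 := (stdNormalCDF_tendsto_atBot.comp hdm).const_mul (Real.exp x)
      have h3 := h1.sub h2
      have hmax : max (1 - Real.exp x) 0 = 0 := by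
        rw [max_eq_right]
        have : 1 < Real.exp x := by
          rw [← Real.exp_zero]; exact Real.exp_lt_exp.2 hx
        linarith
      rw [hmax]
      simpa [gBS] using h3
  refine hg.congr' ?_
  filter_upwards [self_mem_nhdsWithin] with σ hσ
  exact (CBS_eq_gBS (ne_of_gt hσ)).symm

lemma CBS_exists (hT : 0 < T) {t : ℝ} (h1 : max (1 - Real.exp x) 0 ≤ t) (h2 : t < 1) :
    ∃ σ : ℝ, 0 ≤ σ ∧ CBS T x σ = t := by
  rcases eq_or_lt_of_le h1 with he | hlt
  · exact ⟨0, le_refl 0, by simp [CBS, ← he]⟩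
  · have hev1 := (CBS_tendsto_right (x := x) hT).eventually_lt_const hlt
    have hne : (𝓝[>] (0:ℝ)).NeBot := nhdsGT_neBot 0
    obtain ⟨a, ha_lt, ha_pos⟩ := (hev1.and self_mem_nhdsWithin).exists
    have hev2 := ((gBS_tendsto_one (x := x) hT).eventually_const_lt h2).and
      (eventually_ge_atTop (a + 1))
    obtain ⟨b, hb_gt, hb_ge⟩ := hev2.exists
    have hab : a ≤ b := by linarith
    have ha0 : (0:ℝ) < a := ha_pos
    have hsub : Icc a b ⊆ Ioi (0:ℝ) := fun s hs => lt_of_lt_of_le ha0 hs.1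
    have hcont : ContinuousOn (fun σ => CBS T x σ) (Icc a b) := by
      have hg : ContinuousOn (fun σ => gBS T x σ) (Icc a b) := fun s hs =>
        ((gBS_hasDerivAt hT (hsub hs)).continuousAt).continuousWithinAt
      exact hg.congr fun s hs => CBS_eq_gBS (ne_of_gt (hsub hs))
    have hmem : t ∈ Icc (CBS T x a) (CBS T x b) := by
      constructor
      · exact ha_lt.le
      · rw [CBS_eq_gBS (ne_of_gt (lt_of_lt_of_le ha0 hab))]
        exact hb_gt.le
    obtain ⟨σ, hσ_mem, hσ_eq⟩ := intermediate_value_Icc hab hcont hmem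
    exact ⟨σ, (lt_of_lt_of_le ha0 hσ_mem.1).le, hσ_eq⟩
end Lim


lemma CBS_sub_PBS (T x σ : ℝ) : CBS T x σ - PBS T x σ = 1 - Real.exp x := by
  unfold CBS PBS
  by_cases hσ : σ = 0
  · rw [if_pos hσ, if_pos hσ]
    rcases le_total (Real.exp x) 1 with h | h
    · rw [max_eq_left (by linarith), max_eq_right (by linarith)]
      ring
    · rw [max_eq_right (by linarith), max_eq_left (by linarith)]
      ring
  · rw [if_neg hσ, if_neg hσ]
    have e1 := stdNormalCDF_add_neg (dplus T x σ)
    have e2 := stdNormalCDF_add_neg (dminus T x σ)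
    nlinarith [Real.exp_pos x]

lemma CBS_zero (T x : ℝ) : CBS T x 0 = max (1 - Real.exp x) 0 := by simp [CBS]

end AlphaCollateralAux

open AlphaCollateralAux Set Topology in
/-- (a) strict monotonicity in `α` of the `α`-collateralised Call implied
volatility (in particular it is strictly smaller than the Put-implied volatility for
`α < 1`), and (b) strict monotonicity of the existence threshold `x*(α)`. -/
theorem alpha_collateralised_call_iv_monotonicity
    {Ω : Type*} [MeasurableSpace Ω] (μ : Measure Ω) [IsProbabilityMeasure μ]
    (S : Ω → ℝ) (hS : ∀ ω, 0 ≤ S ω) (hSint : Integrable S μ)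
    (m : ℝ) (hm : m = 1 - ∫ ω, S ω ∂μ) (hm0 : 0 < m) (hm1 : m < 1)
    (T : ℝ) (hT : 0 < T) :
    (∀ α α' : ℝ, 0 ≤ α → α < α' → α' ≤ 1 → ∀ x σ σ' : ℝ, 0 ≤ σ → 0 ≤ σ' →
      CBS T x σ = (∫ ω, max (S ω - Real.exp x) 0 ∂μ) + α * m →
      CBS T x σ' = (∫ ω, max (S ω - Real.exp x) 0 ∂μ) + α' * m → σ < σ') ∧
    (∀ α : ℝ, 0 ≤ α → α < 1 → ∀ x σ σp : ℝ, 0 ≤ σ → 0 ≤ σp →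
      CBS T x σ = (∫ ω, max (S ω - Real.exp x) 0 ∂μ) + α * m →
      PBS T x σp = (∫ ω, max (Real.exp x - S ω) 0 ∂μ) → σ < σp) ∧
    (∀ α α' : ℝ, 0 ≤ α → α < α' → α' < 1 →
      sInf {x : ℝ | ∃ σ : ℝ, 0 ≤ σ ∧
          CBS T x σ = (∫ ω, max (S ω - Real.exp x) 0 ∂μ) + α' * m}
        < sInf {x : ℝ | ∃ σ : ℝ, 0 ≤ σ ∧
            CBS T x σ = (∫ ω, max (S ω - Real.exp x) 0 ∂μ) + α * m}) := by
  -- notation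
  set I : ℝ := ∫ ω, S ω ∂μ with hI
  have hI_eq : I = 1 - m := by rw [hm]; ring
  have hI_nonneg : 0 ≤ I := integral_nonneg hS
  -- integrability of the payoff functions
  have hint1 : ∀ x : ℝ, Integrable (fun ω => max (S ω - Real.exp x) 0) μ :=
    fun x => (hSint.sub (integrable_const _)).pos_part
  have hint2 : ∀ x : ℝ, Integrable (fun ω => max (Real.exp x - S ω) 0) μ :=
    fun x => ((integrable_const _).sub hSint).pos_part
  -- Call and Put prices
  set Cf : ℝ → ℝ := fun x => ∫ ω, max (S ω - Real.exp x) 0 ∂μ with hCf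
  set Pf : ℝ → ℝ := fun x => ∫ ω, max (Real.exp x - S ω) 0 ∂μ with hPf
  have hCP : ∀ x : ℝ, Cf x = Pf x + I - Real.exp x := by
    intro x
    have hpt : ∀ ω, max (S ω - Real.exp x) 0
        = max (Real.exp x - S ω) 0 + (S ω - Real.exp x) := by
      intro ω
      rcases le_total (S ω) (Real.exp x) with h | h
      · rw [max_eq_right (by linarith), max_eq_left (by linarith)]; ring
      · rw [max_eq_left (by linarith), max_eq_right (by linarith)]; ring
    have hint3 : Integrable (fun ω => S ω - Real.exp x) μ := hSint.sub (integrable_const _)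
    have h2 : ∫ ω, (S ω - Real.exp x) ∂μ = I - Real.exp x := by
      rw [integral_sub hSint (integrable_const _)]
      simp [hI]
    have h3 : Cf x = ∫ ω, (max (Real.exp x - S ω) 0 + (S ω - Real.exp x)) ∂μ :=
      integral_congr_ae (by filter_upwards with ω using hpt ω)
    rw [h3, integral_add (hint2 x) hint3, h2]
    ring
  have hC_nonneg : ∀ x : ℝ, 0 ≤ Cf x := fun x => integral_nonneg fun ω => le_max_right _ _
  have hC_le : ∀ x : ℝ, Cf x ≤ I := by
    intro x
    refine integral_mono (hint1 x) hSint fun ω => ?_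
    exact max_le (by linarith [Real.exp_pos x]) (hS ω)
  have hP_le_exp : ∀ x : ℝ, Pf x ≤ Real.exp x := by
    intro x
    have := integral_mono (hint2 x) (integrable_const (Real.exp x))
      (fun ω => max_le (by linarith [hS ω]) (Real.exp_pos x).le)
    simpa using this
  have hP_ge : ∀ x : ℝ, Real.exp x - I ≤ Pf x := by
    intro x
    have hint4 : Integrable (fun ω => Real.exp x - S ω) μ := (integrable_const _).sub hSint
    have h2 : ∫ ω, (Real.exp x - S ω) ∂μ = Real.exp x - I := by
      rw [integral_sub (integrable_const _) hSint]
      simp [hI]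
    have h1 := integral_mono hint4 (hint2 x) (fun ω => le_max_left _ _)
    rw [h2] at h1
    exact h1
  have hP_cont : Continuous Pf := by
    rw [continuous_iff_continuousAt]
    intro x₀
    rw [ContinuousAt, tendsto_iff_dist_tendsto_zero]
    have hbound : ∀ x : ℝ, dist (Pf x) (Pf x₀) ≤ |Real.exp x - Real.exp x₀| := by
      intro x
      rw [Real.dist_eq]
      have : Pf x - Pf x₀ = ∫ ω, (max (Real.exp x - S ω) 0 - max (Real.exp x₀ - S ω) 0) ∂μ := by
        rw [integral_sub (hint2 x) (hint2 x₀)]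
      rw [this]
      have hnorm := norm_integral_le_of_norm_le_const (μ := μ)
        (f := fun ω => max (Real.exp x - S ω) 0 - max (Real.exp x₀ - S ω) 0)
        (C := |Real.exp x - Real.exp x₀|) ?_
      · simpa using hnorm
      · filter_upwards with ω
        rw [Real.norm_eq_abs]
        rw [abs_le]
        constructor
        · rcases abs_le.1 (le_refl |Real.exp x - Real.exp x₀|) with ⟨h1, h2⟩
          rcases le_total (S ω) (Real.exp x) with h | h <;>
            rcases le_total (S ω) (Real.exp x₀) with h' | h' <;>
            [skip; skip; skip; skip] <;>
          · simp (failIfUnchanged := false) only [max_eq_left, max_eq_right, sub_nonneg, sub_nonpos] at *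
            rcases abs_cases (Real.exp x - Real.exp x₀) with ⟨he, _⟩ | ⟨he, _⟩ <;>
            · rcases le_total (Real.exp x - S ω) 0 with hc | hc <;>
                rcases le_total (Real.exp x₀ - S ω) 0 with hc' | hc' <;>
              · rw [show max (Real.exp x - S ω) 0 = _ from by
                    first | exact max_eq_right hc | exact max_eq_left hc,
                  show max (Real.exp x₀ - S ω) 0 = _ from by
                    first | exact max_eq_right hc' | exact max_eq_left hc']
                linarith
        · rcases le_total (Real.exp x - S ω) 0 with hc | hc <;>
            rcases le_total (Real.exp x₀ - S ω) 0 with hc' | hc' <;>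
          · rw [show max (Real.exp x - S ω) 0 = _ from by
                first | exact max_eq_right hc | exact max_eq_left hc,
              show max (Real.exp x₀ - S ω) 0 = _ from by
                first | exact max_eq_right hc' | exact max_eq_left hc']
            rcases abs_cases (Real.exp x - Real.exp x₀) with ⟨he, _⟩ | ⟨he, _⟩ <;> linarith
    have hb : Tendsto (fun x : ℝ => |Real.exp x - Real.exp x₀|) (𝓝 x₀) (𝓝 0) := by
      have hc : Continuous (fun x : ℝ => |Real.exp x - Real.exp x₀|) :=
        (Real.continuous_exp.sub continuous_const).abs
      have h4 := hc.tendsto x₀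
      simpa using h4
    exact squeeze_zero (fun x => dist_nonneg) hbound hb
  -- part (a)
  have parta : ∀ α α' : ℝ, 0 ≤ α → α < α' → α' ≤ 1 → ∀ x σ σ' : ℝ, 0 ≤ σ → 0 ≤ σ' →
      CBS T x σ = Cf x + α * m → CBS T x σ' = Cf x + α' * m → σ < σ' := by
    intro α α' hα hαα' hα'1 x σ σ' hσ hσ' h h'
    have hvals : CBS T x σ < CBS T x σ' := by
      rw [h, h']
      have := mul_lt_mul_of_pos_right hαα' hm0
      linarith
    by_contra hcon
    push_neg at hcon
    rcases eq_or_lt_of_le hσ' with h0 | h0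
    · have hlb := CBS_lower_bound (T := T) (x := x) hT hσ
      have hσ'0 : CBS T x σ' = max (1 - Real.exp x) 0 := by rw [← h0, CBS_zero]
      rw [hσ'0] at hvals
      linarith
    · have hσpos : 0 < σ := lt_of_lt_of_le h0 hcon
      have hmono := (gBS_strictMonoOn (x := x) hT).monotoneOn
        (mem_Ioi.2 h0) (mem_Ioi.2 hσpos) hcon
      rw [CBS_eq_gBS h0.ne', CBS_eq_gBS hσpos.ne'] at hvals
      exact absurd hvals (not_lt.2 hmono)
  refine ⟨parta, ?_, ?_⟩
  -- part (a'), comparison with the Put-implied volatility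
  · intro α hα0 hα1 x σ σp hσ hσp hC hP
    have hpar := CBS_sub_PBS T x σp
    have hCp : CBS T x σp = Cf x + 1 * m := by
      have hPf : PBS T x σp = Pf x := hP
      have := hCP x
      rw [hI_eq] at this
      have : Pf x = Cf x - (1 - m) + Real.exp x := by linarith
      rw [one_mul]
      linarith
    exact parta α 1 hα0 hα1 le_rfl x σ σp hσ hσp hC hCp
  -- part (b)
  · intro α α' hα0 hαα' hα'1
    have hα1 : α < 1 := hαα'.trans hα'1
    have hα'0 : 0 ≤ α' := hα0.trans hαα'.le
    -- the existence sets coincide with sublevel sets of Pf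
    have hEq : ∀ β : ℝ, 0 ≤ β → β < 1 →
        {x : ℝ | ∃ σ : ℝ, 0 ≤ σ ∧ CBS T x σ = Cf x + β * m}
          = {x : ℝ | (1 - β) * m ≤ Pf x} := by
      intro β hβ0 hβ1
      ext x
      simp only [mem_setOf_eq]
      constructor
      · rintro ⟨σ, hσ, hσeq⟩
        have hlb := CBS_lower_bound (T := T) (x := x) hT hσ
        rw [hσeq] at hlb
        have h1 : 1 - Real.exp x ≤ Cf x + β * m := le_trans (le_max_left _ _) hlb
        have := hCP x
        rw [hI_eq] at this
        nlinarith
      · intro hx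
        have h1 : max (1 - Real.exp x) 0 ≤ Cf x + β * m := by
          have := hCP x
          rw [hI_eq] at this
          have hb1 : 1 - Real.exp x ≤ Cf x + β * m := by nlinarith
          have hb2 : (0:ℝ) ≤ Cf x + β * m := by nlinarith [hC_nonneg x]
          exact max_le hb1 hb2
        have h2 : Cf x + β * m < 1 := by
          have := hC_le x
          rw [hI_eq] at this
          nlinarith
        obtain ⟨σ, hσ0, hσeq⟩ := CBS_exists (T := T) (x := x) hT h1 h2
        exact ⟨σ, hσ0, hσeq⟩
    rw [hEq α hα0 hα1, hEq α' hα'0 hα'1]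
    -- now a purely real-analytic argument about sInf of sublevel sets of the continuous Pf
    have hL0 : 0 < (1 - α) * m := mul_pos (by linarith) hm0
    have hL'0 : 0 < (1 - α') * m := mul_pos (by linarith) hm0
    have hLL' : (1 - α') * m < (1 - α) * m := by nlinarith
    have hne : ∀ L : ℝ, {x : ℝ | L ≤ Pf x}.Nonempty := by
      intro L
      refine ⟨Real.log (|L| + I + 1), ?_⟩
      have hpos : (0:ℝ) < |L| + I + 1 := by positivity
      have := hP_ge (Real.log (|L| + I + 1))
      rw [Real.exp_log hpos] at this
      simp only [mem_setOf_eq]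
      have := abs_nonneg L
      rcases abs_cases L with ⟨he, _⟩ | ⟨he, _⟩ <;> linarith
    have hbdd : ∀ L : ℝ, 0 < L → BddBelow {x : ℝ | L ≤ Pf x} := by
      intro L hL
      refine ⟨Real.log L, fun x hx => ?_⟩
      have h1 : L ≤ Real.exp x := le_trans hx (hP_le_exp x)
      exact (Real.log_le_iff_le_exp hL).2 h1
    have hcl : ∀ L : ℝ, IsClosed {x : ℝ | L ≤ Pf x} :=
      fun L => isClosed_le continuous_const hP_cont
    set x₀ : ℝ := sInf {x : ℝ | (1 - α) * m ≤ Pf x} with hx₀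
    have hx₀mem : x₀ ∈ {x : ℝ | (1 - α) * m ≤ Pf x} :=
      (hcl _).csInf_mem (hne _) (hbdd _ hL0)
    have hx₀P : (1 - α') * m < Pf x₀ := lt_of_lt_of_le hLL' hx₀mem
    have hev : ∀ᶠ z in 𝓝[<] x₀, (1 - α') * m < Pf z := by
      have ht : Tendsto Pf (𝓝[<] x₀) (𝓝 (Pf x₀)) :=
        (hP_cont.tendsto x₀).mono_left nhdsWithin_le_nhds
      exact ht.eventually_const_lt hx₀P
    obtain ⟨z, hz1, hz2⟩ := (hev.and self_mem_nhdsWithin).exists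
    have : sInf {x : ℝ | (1 - α') * m ≤ Pf x} ≤ z :=
      csInf_le (hbdd _ hL'0) hz1.le
    exact lt_of_le_of_lt this hz2
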